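/- For n ≥ 4, the partition π with unique non-singleton block {1,…,n−1} is not a modular element of NC_n: taking σ with block {2,n} and φ with blocks {1,n−1} and {2,3,…,n−2}, one has φ < π, π ∧ σ = φ ∧ σ = ⊥ and π ∨ σ = φ ∨ σ = ⊤ in NC_n, so (σ,π) is not a modular pair. -/

import Mathlib

/-- A partition (equivalence relation) of `Fin n` is non-crossing if there are no
`i < j < k < l` with `i ∼ k`, `j ∼ l` but `i ≁ j`. -/
def Noncrossing {n : ℕ} (s : Setoid (Fin n)) : Prop :=
  ¬ ∃ i j k l : Fin n, i < j ∧ j < k ∧ k < l ∧ s.r i k ∧ s.r j l ∧ ¬ s.r i j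

/-- The lattice `NC n` of non-crossing partitions of `{1,…,n}` (modelled on `Fin n`),
ordered by refinement (the order inherited from the lattice of all partitions). -/
def NC (n : ℕ) := {s : Setoid (Fin n) // Noncrossing s}

instance (n : ℕ) : PartialOrder (NC n) :=
  inferInstanceAs (PartialOrder {s : Setoid (Fin n) // Noncrossing s})

/-- The partition of `{1,…,n}` whose only non-singleton block is `{1,…,n−1}`
(in `Fin n`: the block of all elements with value `< n - 1`). -/
def ncPiRel (n : ℕ) : Setoid (Fin n) :=
  ⟨fun i j => (i : ℕ) = j ∨ ((i : ℕ) < n - 1 ∧ (j : ℕ) < n - 1),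
   ⟨fun i => Or.inl rfl, fun h => by omega, fun h1 h2 => by omega⟩⟩

theorem ncPiRel_noncrossing (n : ℕ) : Noncrossing (ncPiRel n) := by
  rintro ⟨i, j, k, l, hij, hjk, hkl, hik, hjl, hnij⟩
  simp only [Fin.lt_def] at hij hjk hkl
  unfold ncPiRel at hik hjl hnij
  dsimp only at hik hjl hnij
  omega

/-- `π = 12⋯(n−1)` as an element of `NC n`. -/
def ncPi (n : ℕ) : NC n := ⟨ncPiRel n, ncPiRel_noncrossing n⟩

/-- The partition `σ` of `{1,…,n}` whose only non-singleton block is `{2, n}`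
(in `Fin n`: values `1` and `n − 1`). -/
def ncSigmaRel (n : ℕ) : Setoid (Fin n) :=
  ⟨fun i j => (i : ℕ) = j ∨ ((i : ℕ) = 1 ∧ (j : ℕ) = n - 1) ∨
      ((i : ℕ) = n - 1 ∧ (j : ℕ) = 1),
   ⟨fun i => Or.inl rfl, fun h => by omega, fun h1 h2 => by omega⟩⟩

theorem ncSigmaRel_noncrossing (n : ℕ) : Noncrossing (ncSigmaRel n) := by
  rintro ⟨i, j, k, l, hij, hjk, hkl, hik, hjl, hnij⟩
  simp only [Fin.lt_def] at hij hjk hkl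
  unfold ncSigmaRel at hik hjl hnij
  dsimp only at hik hjl hnij
  have := l.isLt
  omega

/-- `σ = 2n` as an element of `NC n`. -/
def ncSigma (n : ℕ) : NC n := ⟨ncSigmaRel n, ncSigmaRel_noncrossing n⟩

/-- The partition `φ` of `{1,…,n}` with non-singleton blocks `{1, n−1}` and
`{2, 3, …, n−2}` (in `Fin n`: the blocks `{0, n−2}` and `{1, …, n−3}`). -/
def ncPhiRel (n : ℕ) : Setoid (Fin n) :=
  ⟨fun i j => (i : ℕ) = j ∨ ((i : ℕ) = 0 ∧ (j : ℕ) = n - 2) ∨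
      ((i : ℕ) = n - 2 ∧ (j : ℕ) = 0) ∨
      (1 ≤ (i : ℕ) ∧ (i : ℕ) ≤ n - 3 ∧ 1 ≤ (j : ℕ) ∧ (j : ℕ) ≤ n - 3),
   ⟨fun i => Or.inl rfl, fun h => by omega, fun h1 h2 => by omega⟩⟩

theorem ncPhiRel_noncrossing (n : ℕ) : Noncrossing (ncPhiRel n) := by
  rintro ⟨i, j, k, l, hij, hjk, hkl, hik, hjl, hnij⟩
  simp only [Fin.lt_def] at hij hjk hkl
  unfold ncPhiRel at hik hjl hnij
  dsimp only at hik hjl hnij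
  have := l.isLt
  omega

/-- `φ = 1(n−1)/23⋯(n−2)` as an element of `NC n`. -/
def ncPhi (n : ℕ) : NC n := ⟨ncPhiRel n, ncPhiRel_noncrossing n⟩

/-- For n ≥ 4, the partition π with unique non-singleton block
{1,…,n−1} is not a modular element of NC_n: with σ = 2n and φ = 1(n−1)/23⋯(n−2),
one has φ < π, π ∧ σ = φ ∧ σ = ⊥ and π ∨ σ = φ ∨ σ = ⊤ in NC_n, so (σ,π) is not a
modular pair (where (σ,π) is a modular pair if z ∨ (σ ∧ π) = (z ∨ σ) ∧ π for all
z < π). -/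
theorem ncPi_not_modular (n : ℕ) (hn : 4 ≤ n)
    (inf sup : NC n → NC n → NC n)
    (hinf : ∀ a b : NC n, IsGLB {a, b} (inf a b))
    (hsup : ∀ a b : NC n, IsLUB {a, b} (sup a b))
    (bot top : NC n) (hbot : ∀ w : NC n, bot ≤ w) (htop : ∀ w : NC n, w ≤ top) :
    ncPhi n < ncPi n ∧
      inf (ncPi n) (ncSigma n) = bot ∧ inf (ncPhi n) (ncSigma n) = bot ∧
      sup (ncPi n) (ncSigma n) = top ∧ sup (ncPhi n) (ncSigma n) = top ∧
      ¬ (∀ z : NC n, z < ncPi n →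
          sup z (inf (ncSigma n) (ncPi n)) = inf (sup z (ncSigma n)) (ncPi n)) := by
  have hle : ∀ a b : NC n, a ≤ b ↔ ∀ x y : Fin n, a.1.r x y → b.1.r x y :=
    fun a b => Iff.rfl
  -- explicit elements of Fin n
  have h0 : (0 : ℕ) < n := by omega
  have h1 : (1 : ℕ) < n := by omega
  have h2 : n - 2 < n := by omega
  have h3 : n - 1 < n := by omega
  set e0 : Fin n := ⟨0, h0⟩
  set e1 : Fin n := ⟨1, h1⟩
  set e2 : Fin n := ⟨n - 2, h2⟩
  set e3 : Fin n := ⟨n - 1, h3⟩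
  -- φ ≤ π
  have hφπ : ncPhi n ≤ ncPi n := by
    rw [hle]
    intro x y hxy
    change (ncPhiRel n).r x y at hxy
    change (ncPiRel n).r x y
    unfold ncPhiRel at hxy
    unfold ncPiRel
    dsimp only at hxy ⊢
    have := x.isLt; have := y.isLt
    omega
  -- φ < π
  have hφltπ : ncPhi n < ncPi n := by
    refine lt_of_le_not_ge hφπ ?_
    rw [hle]
    intro h
    have := h e0 e1 (Or.inr ⟨show (0:ℕ) < n - 1 by omega, show (1:ℕ) < n - 1 by omega⟩)
    change (ncPhiRel n).r e0 e1 at this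
    unfold ncPhiRel at this
    simp only [e0, e1] at this
    omega
  -- meets with σ are trivial
  have hmeet : ∀ w : NC n, w ≤ ncPi n → w ≤ ncSigma n →
      ∀ x y : Fin n, w.1.r x y → x = y := by
    intro w hwπ hwσ x y hxy
    have hπ := (hle _ _).1 hwπ x y hxy
    have hσ := (hle _ _).1 hwσ x y hxy
    change (ncPiRel n).r x y at hπ
    change (ncSigmaRel n).r x y at hσ
    unfold ncPiRel at hπ
    unfold ncSigmaRel at hσ
    dsimp only at hπ hσ
    exact Fin.ext (by omega)
  -- any upper bound of {π, σ} is total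
  have hjoinπ : ∀ w : NC n, ncPi n ≤ w → ncSigma n ≤ w →
      ∀ x y : Fin n, w.1.r x y := by
    intro w hπw hσw x y
    have key : ∀ z : Fin n, w.1.r z e0 := by
      intro z
      rcases Nat.lt_or_ge (z : ℕ) (n - 1) with hz | hz
      · exact (hle _ _).1 hπw z e0 (Or.inr ⟨hz, show (0:ℕ) < n - 1 by omega⟩)
      · have hz' : (z : ℕ) = n - 1 := by have := z.isLt; omega
        have h1 : w.1.r z e1 :=
          (hle _ _).1 hσw z e1 (Or.inr (Or.inr ⟨hz', rfl⟩))
        have h2 : w.1.r e1 e0 :=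
          (hle _ _).1 hπw e1 e0 (Or.inr ⟨show (1:ℕ) < n - 1 by omega, show (0:ℕ) < n - 1 by omega⟩)
        exact w.1.trans h1 h2
    exact w.1.trans (key x) (w.1.symm (key y))
  -- any upper bound of {φ, σ} in NC is total (uses noncrossing!)
  have hjoinφ : ∀ w : NC n, ncPhi n ≤ w → ncSigma n ≤ w →
      ∀ x y : Fin n, w.1.r x y := by
    intro w hφw hσw x y
    have h02 : w.1.r e0 e2 :=
      (hle _ _).1 hφw e0 e2 (Or.inr (Or.inl ⟨rfl, rfl⟩))
    have h13 : w.1.r e1 e3 :=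
      (hle _ _).1 hσw e1 e3 (Or.inr (Or.inl ⟨rfl, rfl⟩))
    have h01 : w.1.r e0 e1 := by
      by_contra hc
      exact w.2 ⟨e0, e1, e2, e3, Fin.mk_lt_mk.mpr (by omega),
        Fin.mk_lt_mk.mpr (by omega), Fin.mk_lt_mk.mpr (by omega),
        h02, h13, hc⟩
    have key : ∀ z : Fin n, w.1.r z e0 := by
      intro z
      have hzlt := z.isLt
      rcases Nat.lt_or_ge (z : ℕ) 1 with hz | hz
      · have : z = e0 := Fin.ext (show (z:ℕ) = 0 by omega)
        exact this ▸ w.1.refl e0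
      · rcases Nat.lt_or_ge (z : ℕ) (n - 2) with hz2 | hz2
        · -- 1 ≤ z ≤ n-3 : φ-related to e1
          have hz1 : w.1.r z e1 :=
            (hle _ _).1 hφw z e1 (Or.inr (Or.inr (Or.inr ⟨hz, by omega, show 1 ≤ (1:ℕ) by omega, show (1:ℕ) ≤ n - 3 by omega⟩)))
          exact w.1.trans hz1 (w.1.symm h01)
        · rcases Nat.lt_or_ge (z : ℕ) (n - 1) with hz3 | hz3
          · have : z = e2 := Fin.ext (show (z:ℕ) = n - 2 by omega)
            exact this ▸ w.1.symm h02
          · have : z = e3 := Fin.ext (show (z:ℕ) = n - 1 by omega)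
            exact this ▸ w.1.trans (w.1.symm h13) (w.1.symm h01)
    exact w.1.trans (key x) (w.1.symm (key y))
  -- inf π σ = bot and inf σ π = bot
  have hinfπσ : inf (ncPi n) (ncSigma n) = bot := by
    refine le_antisymm ?_ ((hinf _ _).2 (fun w hw => hbot w))
    have h1 : inf (ncPi n) (ncSigma n) ≤ ncPi n := (hinf _ _).1 (by simp)
    have h2 : inf (ncPi n) (ncSigma n) ≤ ncSigma n := (hinf _ _).1 (by simp)
    rw [hle]
    intro x y hxy
    have := hmeet _ h1 h2 x y hxy
    exact this ▸ bot.1.refl y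
  have hinfσπ : inf (ncSigma n) (ncPi n) = bot := by
    refine le_antisymm ?_ ((hinf _ _).2 (fun w hw => hbot w))
    have h1 : inf (ncSigma n) (ncPi n) ≤ ncPi n := (hinf _ _).1 (by simp)
    have h2 : inf (ncSigma n) (ncPi n) ≤ ncSigma n := (hinf _ _).1 (by simp)
    rw [hle]
    intro x y hxy
    have := hmeet _ h1 h2 x y hxy
    exact this ▸ bot.1.refl y
  have hinfφσ : inf (ncPhi n) (ncSigma n) = bot := by
    refine le_antisymm ?_ ((hinf _ _).2 (fun w hw => hbot w))
    have h1 : inf (ncPhi n) (ncSigma n) ≤ ncPhi n := (hinf _ _).1 (by simp)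
    have h2 : inf (ncPhi n) (ncSigma n) ≤ ncSigma n := (hinf _ _).1 (by simp)
    rw [hle]
    intro x y hxy
    have := hmeet _ (le_trans h1 hφπ) h2 x y hxy
    exact this ▸ bot.1.refl y
  -- sups
  have hsupπσ : sup (ncPi n) (ncSigma n) = top := by
    refine le_antisymm (htop _) ?_
    have h1 : ncPi n ≤ sup (ncPi n) (ncSigma n) := (hsup _ _).1 (by simp)
    have h2 : ncSigma n ≤ sup (ncPi n) (ncSigma n) := (hsup _ _).1 (by simp)
    rw [hle]
    intro x y _
    exact hjoinπ _ h1 h2 x y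
  have hsupφσ : sup (ncPhi n) (ncSigma n) = top := by
    refine le_antisymm (htop _) ?_
    have h1 : ncPhi n ≤ sup (ncPhi n) (ncSigma n) := (hsup _ _).1 (by simp)
    have h2 : ncSigma n ≤ sup (ncPhi n) (ncSigma n) := (hsup _ _).1 (by simp)
    rw [hle]
    intro x y _
    exact hjoinφ _ h1 h2 x y
  refine ⟨hφltπ, hinfπσ, hinfφσ, hsupπσ, hsupφσ, ?_⟩
  intro H
  have h := H (ncPhi n) hφltπ
  rw [hinfσπ, hsupφσ] at h
  have hL : sup (ncPhi n) bot = ncPhi n :=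
    le_antisymm ((hsup _ _).2 (by
      intro w hw
      rcases hw with h | h <;> subst h
      · exact le_refl _
      · exact hbot _)) ((hsup _ _).1 (by simp))
  have hR : inf top (ncPi n) = ncPi n :=
    le_antisymm ((hinf _ _).1 (by simp)) ((hinf _ _).2 (by
      intro w hw
      rcases hw with h | h <;> subst h
      · exact htop _
      · exact le_refl _))
  rw [hL, hR] at h
  exact (ne_of_lt hφltπ) h
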